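/- Let S be a GCD semidomain in which every principal ideal is subtractive. Then S is integrally closed in its semifield of fractions. -/
import Mathlib

section aux
variable {S : Type*} [CommSemiring S] [IsCancelMulZero S]

lemma aux_nzd : NoZeroDivisors S := by
  constructor
  intro a b hab
  by_cases ha : a = 0
  · exact Or.inl ha
  · exact Or.inr (mul_left_cancel₀ ha (by rw [hab, mul_zero]))

lemma aux_euclid
    (hgcd : ∀ a b : S, (a ≠ 0 ∨ b ≠ 0) →
      ∃ d : S, d ≠ 0 ∧ d ∣ a ∧ d ∣ b ∧ ∀ e : S, e ∣ a → e ∣ b → e ∣ d)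
    (x y z : S) (hz : z ≠ 0) (hy0 : y ≠ 0)
    (hcop : ∀ e : S, e ∣ x → e ∣ y → e ∣ 1) (h : y ∣ x * z) : y ∣ z := by
  haveI : NoZeroDivisors S := aux_nzd
  obtain ⟨g, hg0, hgx, hgy, hgmax⟩ := hgcd (x * z) (y * z) (Or.inr (mul_ne_zero hy0 hz))
  have hzg : z ∣ g := hgmax z (Dvd.intro_left x rfl) (Dvd.intro_left y rfl)
  obtain ⟨m, rfl⟩ := hzg
  have hmx : m ∣ x := by
    obtain ⟨t, ht⟩ := hgx
    refine ⟨t, mul_left_cancel₀ hz ?_⟩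
    calc z * x = x * z := mul_comm _ _
      _ = z * m * t := ht
      _ = z * (m * t) := mul_assoc _ _ _
  have hmy : m ∣ y := by
    obtain ⟨t, ht⟩ := hgy
    refine ⟨t, mul_left_cancel₀ hz ?_⟩
    calc z * y = y * z := mul_comm _ _
      _ = z * m * t := ht
      _ = z * (m * t) := mul_assoc _ _ _
  have hm1 : m ∣ 1 := hcop m hmx hmy
  have hyzm : y ∣ z * m := hgmax y h (Dvd.intro z rfl)
  obtain ⟨w, hw⟩ := hm1
  exact hyzm.trans ⟨w, by rw [mul_assoc, ← hw, mul_one]⟩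

lemma aux_pow
    (hgcd : ∀ a b : S, (a ≠ 0 ∨ b ≠ 0) →
      ∃ d : S, d ≠ 0 ∧ d ∣ a ∧ d ∣ b ∧ ∀ e : S, e ∣ a → e ∣ b → e ∣ d)
    (x y : S) (hx : x ≠ 0) (hy0 : y ≠ 0)
    (hcop : ∀ e : S, e ∣ x → e ∣ y → e ∣ 1) :
    ∀ k : ℕ, y ∣ x ^ k → y ∣ 1 := by
  haveI : NoZeroDivisors S := aux_nzd
  intro k
  induction k with
  | zero => intro h; simpa using h
  | succ k ih =>
      intro h
      rw [pow_succ, mul_comm] at h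
      exact ih (aux_euclid hgcd x y (x ^ k) (pow_ne_zero _ hx) hy0 hcop h)

end aux

/-- A GCD semidomain in which every principal ideal is subtractive is
integrally closed in its semifield of fractions. -/
theorem gcd_semidomain_integrally_closed {S K : Type*} [CommSemiring S] [Nontrivial S]
    [IsCancelMulZero S] [CommSemiring K] [Algebra S K]
    [IsLocalization (nonZeroDivisors S) K]
    (hgcd : ∀ a b : S, (a ≠ 0 ∨ b ≠ 0) →
      ∃ d : S, d ≠ 0 ∧ d ∣ a ∧ d ∣ b ∧ ∀ e : S, e ∣ a → e ∣ b → e ∣ d)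
    (hsub : ∀ (c : S) (a b : S), a + b ∈ Ideal.span {c} → a ∈ Ideal.span {c} →
      b ∈ Ideal.span ({c} : Set S)) :
    ∀ u : K,
      (∃ n : ℕ, 0 < n ∧ ∃ a b : ℕ → S,
        u ^ n + ∑ i ∈ Finset.range n, algebraMap S K (a i) * u ^ i =
          ∑ i ∈ Finset.range n, algebraMap S K (b i) * u ^ i) →
      u ∈ Set.range (algebraMap S K) := by
  haveI : NoZeroDivisors S := aux_nzd
  rintro u ⟨n, hn, a, b, heq⟩
  obtain ⟨⟨x, y⟩, hxy⟩ := IsLocalization.surj (nonZeroDivisors S) u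
  simp only at hxy
  have hy0 : (y : S) ≠ 0 := nonZeroDivisors.ne_zero y.2
  obtain ⟨d, hd0, ⟨x', hx'⟩, ⟨y', hy'⟩, hdmax⟩ := hgcd x y (Or.inr hy0)
  have hy'0 : y' ≠ 0 := fun h => hy0 (by rw [hy', h, mul_zero])
  have hcop : ∀ e : S, e ∣ x' → e ∣ y' → e ∣ 1 := by
    rintro e ⟨s, hs⟩ ⟨t, ht⟩
    have h1 : d * e ∣ x := ⟨s, by rw [hx', hs, mul_assoc]⟩
    have h2 : d * e ∣ (y : S) := ⟨t, by rw [hy', ht, mul_assoc]⟩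
    obtain ⟨w, hw⟩ := hdmax (d * e) h1 h2
    exact ⟨w, mul_left_cancel₀ hd0 (by rw [mul_one, ← mul_assoc, ← hw])⟩
  have hdu : IsUnit (algebraMap S K d) :=
    IsLocalization.map_units K ⟨d, mem_nonZeroDivisors_of_ne_zero hd0⟩
  have hu : u * algebraMap S K y' = algebraMap S K x' := by
    apply hdu.mul_left_cancel
    rw [← mul_assoc, mul_comm (algebraMap S K d) u, mul_assoc, ← map_mul, ← hy', hxy, hx',
      map_mul]
  have hpow : ∀ i, i ≤ n →
      u ^ i * (algebraMap S K y') ^ n = algebraMap S K (x' ^ i * y' ^ (n - i)) := by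
    intro i hi
    have hni : n = i + (n - i) := (Nat.add_sub_cancel' hi).symm
    rw [map_mul, map_pow, map_pow]
    calc u ^ i * (algebraMap S K y') ^ n
        = u ^ i * ((algebraMap S K y') ^ i * (algebraMap S K y') ^ (n - i)) := by
          rw [← pow_add, ← hni]
      _ = (u * algebraMap S K y') ^ i * (algebraMap S K y') ^ (n - i) := by
          rw [mul_pow]; ring
      _ = (algebraMap S K x') ^ i * (algebraMap S K y') ^ (n - i) := by rw [hu]
  have hS : x' ^ n + ∑ i ∈ Finset.range n, a i * (x' ^ i * y' ^ (n - i)) =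
      ∑ i ∈ Finset.range n, b i * (x' ^ i * y' ^ (n - i)) := by
    have hinj : Function.Injective (algebraMap S K) := by
      intro p q hpq
      obtain ⟨c, hc⟩ := (IsLocalization.eq_iff_exists (nonZeroDivisors S) K).mp hpq
      exact mul_left_cancel₀ (nonZeroDivisors.ne_zero c.2) hc
    apply hinj
    rw [map_add, map_sum, map_sum]
    have e1 : ∀ i ∈ Finset.range n,
        algebraMap S K (a i * (x' ^ i * y' ^ (n - i))) =
          (algebraMap S K (a i) * u ^ i) * (algebraMap S K y') ^ n := by
      intro i hi
      rw [map_mul, ← hpow i (Finset.mem_range.1 hi).le]; ring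
    have e2 : ∀ i ∈ Finset.range n,
        algebraMap S K (b i * (x' ^ i * y' ^ (n - i))) =
          (algebraMap S K (b i) * u ^ i) * (algebraMap S K y') ^ n := by
      intro i hi
      rw [map_mul, ← hpow i (Finset.mem_range.1 hi).le]; ring
    have h0 : algebraMap S K (x' ^ n) = u ^ n * (algebraMap S K y') ^ n := by
      rw [hpow n le_rfl, Nat.sub_self, pow_zero, mul_one]
    rw [Finset.sum_congr rfl e1, Finset.sum_congr rfl e2, h0, ← Finset.sum_mul,
      ← Finset.sum_mul, ← add_mul, heq]
  have hA : y' ∣ ∑ i ∈ Finset.range n, a i * (x' ^ i * y' ^ (n - i)) :=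
    Finset.dvd_sum fun i hi =>
      ((dvd_pow_self y' (Nat.sub_ne_zero_of_lt (Finset.mem_range.1 hi))).mul_left
        (x' ^ i)).mul_left (a i)
  have hB : y' ∣ ∑ i ∈ Finset.range n, b i * (x' ^ i * y' ^ (n - i)) :=
    Finset.dvd_sum fun i hi =>
      ((dvd_pow_self y' (Nat.sub_ne_zero_of_lt (Finset.mem_range.1 hi))).mul_left
        (x' ^ i)).mul_left (b i)
  have hdvd : y' ∣ x' ^ n := by
    rw [← Ideal.mem_span_singleton]
    apply hsub y' (∑ i ∈ Finset.range n, a i * (x' ^ i * y' ^ (n - i))) (x' ^ n)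
    · rw [add_comm, hS]
      exact Ideal.mem_span_singleton.2 hB
    · exact Ideal.mem_span_singleton.2 hA
  have hy'1 : y' ∣ 1 := by
    by_cases hx0 : x' = 0
    · exact hcop y' (hx0 ▸ dvd_zero y') dvd_rfl
    · exact aux_pow hgcd x' y' hx0 hy'0 hcop n hdvd
  obtain ⟨v, hv⟩ := hy'1
  refine ⟨x' * v, ?_⟩
  calc algebraMap S K (x' * v) = u * algebraMap S K y' * algebraMap S K v := by
        rw [map_mul, hu]
    _ = u * algebraMap S K (y' * v) := by rw [map_mul, mul_assoc]
    _ = u := by rw [← hv, map_one, mul_one]
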